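/- Let Z₂¹ be the 2-dimensional complex Zinbiel algebra with basis (e₁, e₂) and e₁·e₁ = e₂ (all other products of basis elements zero). A linear map d : Z₂¹ → Z₂¹ is a quasi-derivation of Z₂¹ if and only if d(e₂) ∈ ℂe₂, i.e., if and only if the matrix of d in the basis (e₁, e₂) is lower triangular. In particular, QDer(Z₂¹) is a 3-dimensional subspace of End(Z₂¹). -/
import Mathlib

def mulZ21 (p q : Fin 2 → ℂ) : Fin 2 → ℂ := ![0, p 0 * q 0]

/-- evaluation functional `d ↦ (d e₂) 0`. -/
noncomputable def phiZ : Module.End ℂ (Fin 2 → ℂ) →ₗ[ℂ] ℂ :=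
  (LinearMap.proj 0).comp (LinearMap.applyₗ (![0, 1] : Fin 2 → ℂ))

lemma decomp (p : Fin 2 → ℂ) : p = p 0 • ![1, 0] + p 1 • ![0, 1] := by
  funext i; fin_cases i <;> simp

lemma keyZ (d : Module.End ℂ (Fin 2 → ℂ)) :
    (∃ d' : Module.End ℂ (Fin 2 → ℂ), ∀ p q : Fin 2 → ℂ,
      mulZ21 (d p) q + mulZ21 p (d q) = d' (mulZ21 p q)) ↔ (d ![0, 1]) 0 = 0 := by
  constructor
  · rintro ⟨d', h⟩
    have h2 := congrFun (h ![0, 1] ![1, 0]) 1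
    have hz : mulZ21 ![0, 1] ![1, 0] = (0 : Fin 2 → ℂ) := by
      funext i; fin_cases i <;> simp [mulZ21]
    rw [hz, map_zero] at h2
    simpa [mulZ21] using h2
  · intro hb
    set a := (d ![1, 0]) 0 with ha
    refine ⟨(2 * a) • LinearMap.id, fun p q => ?_⟩
    have hdp : ∀ r : Fin 2 → ℂ, d r = r 0 • d ![1, 0] + r 1 • d ![0, 1] := by
      intro r
      conv_lhs => rw [decomp r]
      rw [map_add, map_smul, map_smul]
    have hp : (d p) 0 = p 0 * a := by rw [hdp p]; simp [ha, hb]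
    have hq : (d q) 0 = q 0 * a := by rw [hdp q]; simp [ha, hb]
    funext i; fin_cases i
    · simp [mulZ21]
    · simp [mulZ21, hp, hq]; ring

/-- A linear map `d` on `Z₂¹` is a quasi-derivation iff `d(e₂) ∈ ℂ e₂`
(equivalently, its matrix in the basis `(e₁, e₂)` is lower triangular);
in particular `QDer(Z₂¹)` is a 3-dimensional subspace of `End(Z₂¹)`. -/
theorem quasiDerivations_Z21 :
    (∀ d : Module.End ℂ (Fin 2 → ℂ),
      (∃ d' : Module.End ℂ (Fin 2 → ℂ), ∀ p q : Fin 2 → ℂ,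
        mulZ21 (d p) q + mulZ21 p (d q) = d' (mulZ21 p q)) ↔
      ∃ c : ℂ, d ![0, 1] = c • ![0, 1]) ∧
    ∃ S : Submodule ℂ (Module.End ℂ (Fin 2 → ℂ)),
      (∀ d, d ∈ S ↔ ∃ d' : Module.End ℂ (Fin 2 → ℂ), ∀ p q : Fin 2 → ℂ,
        mulZ21 (d p) q + mulZ21 p (d q) = d' (mulZ21 p q)) ∧
      Module.finrank ℂ S = 3 := by
  have hc : ∀ d : Module.End ℂ (Fin 2 → ℂ),
      (d ![0, 1]) 0 = 0 ↔ ∃ c : ℂ, d ![0, 1] = c • ![0, 1] := by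
    intro d
    constructor
    · intro h
      refine ⟨(d ![0, 1]) 1, ?_⟩
      funext i; fin_cases i <;> simp [h]
    · rintro ⟨c, hcc⟩; rw [hcc]; simp
  constructor
  · intro d; rw [keyZ d, hc d]
  · refine ⟨LinearMap.ker phiZ, fun d => ?_, ?_⟩
    · rw [LinearMap.mem_ker, keyZ d]
      rfl
    · have hsurj : Function.Surjective phiZ := by
        intro c
        refine ⟨c • (LinearMap.proj 1 : (Fin 2 → ℂ) →ₗ[ℂ] ℂ).smulRight ![1, 0], ?_⟩
        simp [phiZ]
      have h1 := LinearMap.finrank_range_add_finrank_ker phiZ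
      rw [LinearMap.range_eq_top.mpr hsurj] at h1
      have h4 : Module.finrank ℂ (Module.End ℂ (Fin 2 → ℂ)) = 4 := by
        rw [Module.finrank_linearMap]
        simp
      simp [h4] at h1
      omega
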